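/- Suppose β ≥ 2/μ and K_0 ≥ βL²/μ + βμ. Then for all k ≥ 0, E[‖x_k − x*‖²] ≤ (K_0‖x_0 − x*‖² + 2βσ²/μ)/(k + K_0). -/

import Mathlib

open MeasureTheory ProbabilityTheory
open scoped ProbabilityTheory
open scoped RealInnerProductSpace

section Aux2

variable {Ω : Type*} {m m0 : MeasurableSpace Ω} {μ : Measure Ω} {d : ℕ}

lemma aux_inner_integrable {E : Type*} [NormedAddCommGroup E] [InnerProductSpace ℝ E]
    {f g : Ω → E} (hf : MemLp f 2 μ) (hg : MemLp g 2 μ) :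
    Integrable (fun ω => ⟪f ω, g ω⟫) μ := by
  have h := L2.integrable_inner (𝕜 := ℝ) (hf.toLp f) (hg.toLp g)
  refine h.congr ?_
  filter_upwards [hf.coeFn_toLp, hg.coeFn_toLp] with ω h1 h2
  rw [h1, h2]

lemma aux_mul_integrable {f g : Ω → ℝ} (hf : MemLp f 2 μ) (hg : MemLp g 2 μ) :
    Integrable (fun ω => f ω * g ω) μ := by
  have h := aux_inner_integrable hf hg
  refine h.congr ?_
  filter_upwards with ω
  simp [RCLike.inner_apply, mul_comm]

lemma aux_coord_memLp {f : Ω → EuclideanSpace ℝ (Fin d)} (hf : MemLp f 2 μ) (i : Fin d) :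
    MemLp (fun ω => f ω i) 2 μ := by
  have := (EuclideanSpace.proj (𝕜 := ℝ) i).comp_memLp' hf
  exact this

lemma aux_cross_zero (hm : m ≤ m0) [IsProbabilityMeasure μ]
    {g η : Ω → EuclideanSpace ℝ (Fin d)}
    (hgm : StronglyMeasurable[m] g) (hg2 : MemLp g 2 μ) (hη2 : MemLp η 2 μ)
    (hmds : μ[η|m] =ᵐ[μ] 0) :
    ∫ ω, ⟪g ω, η ω⟫ ∂μ = 0 := by
  haveI : SigmaFinite (μ.trim hm) := (isFiniteMeasure_trim hm).toSigmaFinite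
  have hηint : Integrable η μ := hη2.integrable one_le_two
  -- coordinatewise conditional expectation of η is zero
  have hcoord : ∀ i : Fin d, μ[(fun ω => η ω i)|m] =ᵐ[μ] 0 := by
    intro i
    have hfi : Integrable (fun ω => η ω i) μ := (aux_coord_memLp hη2 i).integrable one_le_two
    have h0 : (fun _ => (0:ℝ)) =ᵐ[μ] μ[(fun ω => η ω i)|m] := by
      refine ae_eq_condExp_of_forall_setIntegral_eq hm hfi
        (fun s _ _ => integrableOn_zero) ?_
        stronglyMeasurable_const.aestronglyMeasurable
      intro s hs _
      have h2 : ∫ ω in s, η ω ∂μ = 0 := by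
        rw [← setIntegral_condExp hm hηint hs]
        calc ∫ ω in s, (μ[η|m]) ω ∂μ = ∫ ω in s, (0 : EuclideanSpace ℝ (Fin d)) ∂μ :=
              integral_congr_ae (ae_restrict_of_ae (hmds.mono fun ω hω => hω))
          _ = 0 := by simp
      have h1 : ∫ ω in s, (EuclideanSpace.proj (𝕜 := ℝ) i) (η ω) ∂μ
          = (EuclideanSpace.proj (𝕜 := ℝ) i) (∫ ω in s, η ω ∂μ) :=
        ((EuclideanSpace.proj (𝕜 := ℝ) i).integral_comp_comm hηint.restrict)
      have h3 : ∫ ω in s, η ω i ∂μ = ∫ ω in s, (EuclideanSpace.proj (𝕜 := ℝ) i) (η ω) ∂μ := by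
        refine integral_congr_ae ?_
        filter_upwards with ω
        simp
      rw [h3, h1, h2]
      simp
    exact h0.symm
  -- each coordinate product has zero expectation
  have hzero : ∀ i : Fin d, ∫ ω, g ω i * η ω i ∂μ = 0 := by
    intro i
    have hgi2 := aux_coord_memLp hg2 i
    have hηi2 := aux_coord_memLp hη2 i
    have hηi_int : Integrable (fun ω => η ω i) μ := hηi2.integrable one_le_two
    have hmul_int : Integrable ((fun ω => g ω i) * fun ω => η ω i) μ :=
      aux_mul_integrable hgi2 hηi2
    have hgim : StronglyMeasurable[m] (fun ω => g ω i) :=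
      (EuclideanSpace.proj (𝕜 := ℝ) i).continuous.comp_stronglyMeasurable hgm
    have hpull := condExp_mul_of_stronglyMeasurable_left (μ := μ) hgim hmul_int hηi_int
    have hz : μ[(fun ω => g ω i) * (fun ω => η ω i)|m] =ᵐ[μ] 0 := by
      refine hpull.trans ?_
      filter_upwards [hcoord i] with ω hω
      simp [hω]
    have := integral_condExp (μ := μ) (f := (fun ω => g ω i) * fun ω => η ω i) hm
    have h4 : ∫ ω, g ω i * η ω i ∂μ
        = ∫ ω, ((fun ω => g ω i) * fun ω => η ω i) ω ∂μ := rfl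
    rw [h4, ← this, integral_congr_ae hz]
    simp
  have hrw : (fun ω => ⟪g ω, η ω⟫) = fun ω => ∑ i, g ω i * η ω i := by
    funext ω
    simp [PiLp.inner_apply, RCLike.inner_apply, mul_comm]
  rw [hrw, integral_finset_sum _ (fun i _ => aux_mul_integrable (aux_coord_memLp hg2 i) (aux_coord_memLp hη2 i))]
  exact Finset.sum_eq_zero fun i _ => hzero i

lemma aux_second_moment (hm : m ≤ m0) [IsProbabilityMeasure μ] {η : Ω → EuclideanSpace ℝ (Fin d)}
    {σ : ℝ} (hint2 : Integrable (fun ω => ‖η ω‖ ^ 2) μ)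
    (hvar : ∀ᵐ ω ∂μ, (μ[(fun ω' => ‖η ω'‖ ^ 2)|m]) ω ≤ σ ^ 2) :
    ∫ ω, ‖η ω‖ ^ 2 ∂μ ≤ σ ^ 2 := by
  haveI : SigmaFinite (μ.trim hm) := (isFiniteMeasure_trim hm).toSigmaFinite
  calc ∫ ω, ‖η ω‖ ^ 2 ∂μ = ∫ ω, (μ[(fun ω' => ‖η ω'‖ ^ 2)|m]) ω ∂μ :=
        (integral_condExp hm).symm
    _ ≤ ∫ _ω, σ ^ 2 ∂μ := integral_mono_ae integrable_condExp (integrable_const _) hvar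
    _ = σ ^ 2 := by simp

end Aux2

set_option maxHeartbeats 1000000 in
/-- Finite-time bound for SA under light-tailed martingale difference noise:
for the iteration `x_{k+1} = x_k − β_k(F(x_k) + η_k)`, `β_k = β/(k+K₀)`, with
`F` `μ`-strongly monotone and `L`-Lipschitz, martingale difference noise with
conditional second moment bounded by `σ²`, if `β ≥ 2/μ` and
`K₀ ≥ βL²/μ + βμ`, then `E[‖x_k − x*‖²] ≤ (K₀‖x₀ − x*‖² + 2βσ²/μ)/(k + K₀)`. -/
theorem stmt_0 {d : ℕ} {Ω : Type*} [MeasureSpace Ω]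
    [IsProbabilityMeasure (ℙ : Measure Ω)]
    (F : EuclideanSpace ℝ (Fin d) → EuclideanSpace ℝ (Fin d))
    (μ L σ β K0 : ℝ) (hμ : 0 < μ) (hL : 0 < L) (hσ : 0 < σ)
    (hβpos : 0 < β) (hK0pos : 0 < K0)
    (hmono : ∀ x y, μ * ‖x - y‖ ^ 2 ≤ ⟪F x - F y, x - y⟫)
    (hlip : ∀ x y, ‖F x - F y‖ ≤ L * ‖x - y‖)
    (xstar : EuclideanSpace ℝ (Fin d)) (hstar : F xstar = 0)
    (x0 : EuclideanSpace ℝ (Fin d))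
    (η : ℕ → Ω → EuclideanSpace ℝ (Fin d))
    (x : ℕ → Ω → EuclideanSpace ℝ (Fin d))
    (hx0 : ∀ ω, x 0 ω = x0)
    (hxrec : ∀ (k : ℕ) (ω : Ω),
      x (k + 1) ω = x k ω - (β / ((k : ℝ) + K0)) • (F (x k ω) + η k ω))
    -- the filtration `𝓕 k = σ(x₀, η₀, …, η_{k−1})` (here `x₀` is deterministic)
    (𝓕 : ℕ → MeasurableSpace Ω)
    (h𝓕 : ∀ k, 𝓕 k = ⨆ i ∈ Finset.range k,
      MeasurableSpace.comap (η i) inferInstance)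
    (h𝓕le : ∀ k, 𝓕 k ≤ (inferInstance : MeasurableSpace Ω))
    (hmeas : ∀ k, Measurable (η k))
    (hint : ∀ k, Integrable (η k) (ℙ : Measure Ω))
    (hint2 : ∀ k, Integrable (fun ω => ‖η k ω‖ ^ 2) (ℙ : Measure Ω))
    -- martingale difference: `E[η_k | 𝓕_k] = 0`
    (hmds : ∀ k, (ℙ : Measure Ω)[η k | 𝓕 k] =ᵐ[(ℙ : Measure Ω)] 0)
    -- conditional second moment bound: `E[‖η_k‖² | 𝓕_k] ≤ σ²` a.s.
    (hvar : ∀ k, ∀ᵐ ω ∂(ℙ : Measure Ω),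
      ((ℙ : Measure Ω)[(fun ω' => ‖η k ω'‖ ^ 2) | 𝓕 k]) ω ≤ σ ^ 2)
    (hβ : β ≥ 2 / μ) (hK0 : K0 ≥ β * L ^ 2 / μ + β * μ) :
    ∀ k : ℕ, ∫ ω, ‖x k ω - xstar‖ ^ 2 ∂(ℙ : Measure Ω)
      ≤ (K0 * ‖x0 - xstar‖ ^ 2 + 2 * β * σ ^ 2 / μ) / ((k : ℝ) + K0) := by
  have hFcont : Continuous F := by
    have hlw : LipschitzWith (Real.toNNReal L) F := by
      refine LipschitzWith.of_dist_le_mul fun a b => ?_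
      rw [dist_eq_norm, dist_eq_norm, Real.coe_toNNReal L hL.le]
      exact hlip a b
    exact hlw.continuous
  have hmle : ∀ k, 𝓕 k ≤ 𝓕 (k+1) := by
    intro k
    rw [h𝓕, h𝓕]
    exact biSup_mono fun i hi =>
      Finset.mem_range.2 (Nat.lt_succ_of_lt (Finset.mem_range.1 hi))
  have hηSM : ∀ k, StronglyMeasurable[𝓕 (k+1)] (η k) := by
    intro k
    have hle : MeasurableSpace.comap (η k) inferInstance ≤ 𝓕 (k+1) := by
      rw [h𝓕]
      exact le_biSup (fun i => MeasurableSpace.comap (η i) inferInstance)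
        (Finset.self_mem_range_succ k)
    exact (measurable_iff_comap_le.2 hle : Measurable[𝓕 (k+1)] (η k)).stronglyMeasurable
  have hxSM : ∀ k, StronglyMeasurable[𝓕 k] (x k) := by
    intro k
    induction k with
    | zero =>
      have hx : x 0 = fun _ => x0 := funext hx0
      rw [hx]; exact stronglyMeasurable_const
    | succ k ih =>
      have hx : x (k+1) = fun ω => x k ω - (β / ((k : ℝ) + K0)) • (F (x k ω) + η k ω) :=
        funext (hxrec k)
      rw [hx]
      exact ((ih.mono (hmle k)).sub
        (((hFcont.comp_stronglyMeasurable (ih.mono (hmle k))).add (hηSM k)).const_smul (β / ((k : ℝ) + K0))))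
  have hη2 : ∀ k, MemLp (η k) 2 (ℙ : Measure Ω) := fun k =>
    (memLp_two_iff_integrable_sq_norm
      ((hmeas k).stronglyMeasurable.aestronglyMeasurable)).2 (hint2 k)
  have hFbound : ∀ z, ‖F z‖ ≤ L * ‖z - xstar‖ := fun z => by
    have h := hlip z xstar; rwa [hstar, sub_zero] at h
  have hx2 : ∀ k, MemLp (fun ω => x k ω - xstar) 2 (ℙ : Measure Ω) := by
    intro k
    induction k with
    | zero =>
      have hx : (fun ω => x 0 ω - xstar) = fun _ => x0 - xstar := by
        funext ω; rw [hx0]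
      rw [hx]; exact memLp_const _
    | succ k ih =>
      have hFk2 : MemLp (fun ω => F (x k ω)) 2 (ℙ : Measure Ω) :=
        MemLp.of_le_mul ih
          ((hFcont.comp_stronglyMeasurable ((hxSM k).mono (h𝓕le k))).aestronglyMeasurable)
          (Filter.Eventually.of_forall fun ω => hFbound (x k ω))
      have hx : (fun ω => x (k+1) ω - xstar)
          = fun ω => (x k ω - xstar) - (β / ((k : ℝ) + K0)) • (F (x k ω) + η k ω) := by
        funext ω; rw [hxrec k ω]; abel
      rw [hx]
      exact ih.sub ((hFk2.add (hη2 k)).const_smul (β / ((k : ℝ) + K0)))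
  have key : ∀ (a u v : EuclideanSpace ℝ (Fin d)) (c : ℝ),
      ‖a - c • (u + v)‖ ^ 2
        = ‖a‖^2 - 2*c*⟪u, a⟫ - 2*c*⟪v, a⟫ + c^2*‖u‖^2 + 2*c^2*⟪u, v⟫ + c^2*‖v‖^2 := by
    intro a u v c
    rw [norm_sub_sq_real, inner_smul_right, inner_add_right, norm_smul, mul_pow,
      norm_add_sq_real, real_inner_comm a u, real_inner_comm a v]
    simp only [Real.norm_eq_abs, sq_abs]
    ring
  have hrec : ∀ k : ℕ, ∫ ω, ‖x (k+1) ω - xstar‖^2 ∂(ℙ : Measure Ω)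
      ≤ (1 - 2*μ*(β/((k:ℝ)+K0)) + L^2*(β/((k:ℝ)+K0))^2)
          * ∫ ω, ‖x k ω - xstar‖^2 ∂(ℙ : Measure Ω) + (β/((k:ℝ)+K0))^2 * σ^2 := by
    intro k
    set c : ℝ := β/((k:ℝ)+K0) with hcdef
    have hK0k : (0:ℝ) < (k:ℝ) + K0 := by positivity
    have hcpos : 0 < c := by positivity
    set a : Ω → EuclideanSpace ℝ (Fin d) := fun ω => x k ω - xstar with hadef
    set u : Ω → EuclideanSpace ℝ (Fin d) := fun ω => F (x k ω) with hudef
    set v : Ω → EuclideanSpace ℝ (Fin d) := η k with hvdef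
    have ha2 : MemLp a 2 (ℙ : Measure Ω) := hx2 k
    have haSM : StronglyMeasurable[𝓕 k] a := (hxSM k).sub stronglyMeasurable_const
    have huSM : StronglyMeasurable[𝓕 k] u := hFcont.comp_stronglyMeasurable (hxSM k)
    have hu2 : MemLp u 2 (ℙ : Measure Ω) :=
      MemLp.of_le_mul ha2 ((huSM.mono (h𝓕le k)).aestronglyMeasurable)
        (Filter.Eventually.of_forall fun ω => hFbound (x k ω))
    have hv2 : MemLp v 2 (ℙ : Measure Ω) := hη2 k
    have i1 : Integrable (fun ω => ‖a ω‖^2) (ℙ : Measure Ω) :=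
      (memLp_two_iff_integrable_sq_norm ha2.aestronglyMeasurable).1 ha2
    have i2 : Integrable (fun ω => ⟪u ω, a ω⟫) (ℙ : Measure Ω) := aux_inner_integrable hu2 ha2
    have i3 : Integrable (fun ω => ⟪v ω, a ω⟫) (ℙ : Measure Ω) := aux_inner_integrable hv2 ha2
    have i4 : Integrable (fun ω => ‖u ω‖^2) (ℙ : Measure Ω) :=
      (memLp_two_iff_integrable_sq_norm hu2.aestronglyMeasurable).1 hu2
    have i5 : Integrable (fun ω => ⟪u ω, v ω⟫) (ℙ : Measure Ω) := aux_inner_integrable hu2 hv2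
    have i6 : Integrable (fun ω => ‖v ω‖^2) (ℙ : Measure Ω) := hint2 k
    have hptw : (fun ω => ‖x (k+1) ω - xstar‖^2)
        = fun ω => ‖a ω‖^2 - 2*c*⟪u ω, a ω⟫ - 2*c*⟪v ω, a ω⟫
            + c^2*‖u ω‖^2 + 2*c^2*⟪u ω, v ω⟫ + c^2*‖v ω‖^2 := by
      funext ω
      rw [hxrec k ω,
        show x k ω - c • (F (x k ω) + η k ω) - xstar = a ω - c • (u ω + v ω) by
          simp only [hadef, hudef, hvdef]; abel]
      exact key _ _ _ _
    have j2 : Integrable (fun ω => 2*c*⟪u ω, a ω⟫) (ℙ : Measure Ω) := i2.const_mul _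
    have j3 : Integrable (fun ω => 2*c*⟪v ω, a ω⟫) (ℙ : Measure Ω) := i3.const_mul _
    have j4 : Integrable (fun ω => c^2*‖u ω‖^2) (ℙ : Measure Ω) := i4.const_mul _
    have j5 : Integrable (fun ω => 2*c^2*⟪u ω, v ω⟫) (ℙ : Measure Ω) := i5.const_mul _
    have j6 : Integrable (fun ω => c^2*‖v ω‖^2) (ℙ : Measure Ω) := i6.const_mul _
    have j12 : Integrable (fun ω => ‖a ω‖^2 - 2*c*⟪u ω, a ω⟫) (ℙ : Measure Ω) := i1.sub j2
    have j13 : Integrable (fun ω => ‖a ω‖^2 - 2*c*⟪u ω, a ω⟫ - 2*c*⟪v ω, a ω⟫)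
      (ℙ : Measure Ω) := j12.sub j3
    have j14 : Integrable (fun ω => ‖a ω‖^2 - 2*c*⟪u ω, a ω⟫ - 2*c*⟪v ω, a ω⟫
      + c^2*‖u ω‖^2) (ℙ : Measure Ω) := j13.add j4
    have j15 : Integrable (fun ω => ‖a ω‖^2 - 2*c*⟪u ω, a ω⟫ - 2*c*⟪v ω, a ω⟫
      + c^2*‖u ω‖^2 + 2*c^2*⟪u ω, v ω⟫) (ℙ : Measure Ω) := j14.add j5
    rw [hptw,
      integral_add j15 j6, integral_add j14 j5, integral_add j13 j4,
      integral_sub j12 j3, integral_sub i1 j2,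
      integral_const_mul, integral_const_mul, integral_const_mul, integral_const_mul,
      integral_const_mul]
    have h3 : ∫ ω, ⟪v ω, a ω⟫ ∂(ℙ : Measure Ω) = 0 := by
      have h := aux_cross_zero (h𝓕le k) haSM ha2 hv2 (hmds k)
      rw [← h]
      exact integral_congr_ae (Filter.Eventually.of_forall fun ω => real_inner_comm _ _)
    have h5 : ∫ ω, ⟪u ω, v ω⟫ ∂(ℙ : Measure Ω) = 0 :=
      aux_cross_zero (h𝓕le k) huSM hu2 hv2 (hmds k)
    have h2 : μ * ∫ ω, ‖a ω‖^2 ∂(ℙ : Measure Ω) ≤ ∫ ω, ⟪u ω, a ω⟫ ∂(ℙ : Measure Ω) := by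
      rw [← integral_const_mul]
      refine integral_mono (i1.const_mul μ) i2 fun ω => ?_
      have h := hmono (x k ω) xstar
      rwa [hstar, sub_zero] at h
    have h4 : ∫ ω, ‖u ω‖^2 ∂(ℙ : Measure Ω) ≤ L^2 * ∫ ω, ‖a ω‖^2 ∂(ℙ : Measure Ω) := by
      rw [← integral_const_mul]
      refine integral_mono i4 (i1.const_mul _) fun ω => ?_
      calc ‖u ω‖^2 ≤ (L * ‖a ω‖)^2 :=
            pow_le_pow_left₀ (norm_nonneg _) (hFbound (x k ω)) 2
        _ = L^2 * ‖a ω‖^2 := by ring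
    have h6 : ∫ ω, ‖v ω‖^2 ∂(ℙ : Measure Ω) ≤ σ^2 :=
      aux_second_moment (h𝓕le k) (hint2 k) (hvar k)
    rw [h3, h5]
    have hc2 : (0:ℝ) ≤ c^2 := sq_nonneg c
    calc ∫ ω, ‖a ω‖^2 ∂(ℙ : Measure Ω) - 2*c*∫ ω, ⟪u ω, a ω⟫ ∂(ℙ : Measure Ω) - 2*c*0
          + c^2*∫ ω, ‖u ω‖^2 ∂(ℙ : Measure Ω) + 2*c^2*0 + c^2*∫ ω, ‖v ω‖^2 ∂(ℙ : Measure Ω)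
        ≤ ∫ ω, ‖a ω‖^2 ∂(ℙ : Measure Ω) - 2*c*(μ * ∫ ω, ‖a ω‖^2 ∂(ℙ : Measure Ω)) - 2*c*0
          + c^2*(L^2 * ∫ ω, ‖a ω‖^2 ∂(ℙ : Measure Ω)) + 2*c^2*0 + c^2*σ^2 := by
          gcongr
      _ = (1 - 2*μ*c + L^2*c^2) * ∫ ω, ‖a ω‖^2 ∂(ℙ : Measure Ω) + c^2*σ^2 := by ring
  -- numeric induction
  set C : ℝ := K0 * ‖x0 - xstar‖ ^ 2 + 2 * β * σ ^ 2 / μ with hCdef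
  have hβμ : 2 ≤ β * μ := by
    rw [ge_iff_le, div_le_iff₀ hμ] at hβ
    linarith
  have hK1 : β * L^2 ≤ K0 * μ := by
    have h1 : β * L^2 / μ ≤ K0 := by nlinarith [mul_pos hβpos hμ]
    rw [div_le_iff₀ hμ] at h1
    linarith
  have hK2 : β * μ ≤ K0 := by nlinarith [div_nonneg (by positivity : (0:ℝ) ≤ β * L^2) hμ.le]
  have hCσ : 2*β*σ^2/μ ≤ C := by
    rw [hCdef]
    nlinarith [sq_nonneg ‖x0 - xstar‖, hK0pos]
  have hCσ' : 2*β*σ^2 ≤ C*μ := by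
    rw [div_le_iff₀ hμ] at hCσ
    linarith
  have hCpos : 0 < C := lt_of_lt_of_le (by positivity) hCσ
  intro k
  induction k with
  | zero =>
    have hint0 : ∫ ω, ‖x 0 ω - xstar‖^2 ∂(ℙ : Measure Ω) = ‖x0 - xstar‖^2 := by
      simp [hx0]
    rw [hint0, Nat.cast_zero, zero_add, le_div_iff₀ hK0pos, hCdef]
    nlinarith [div_nonneg (by positivity : (0:ℝ) ≤ 2*β*σ^2) hμ.le]
  | succ k ih =>
    have ht : (0:ℝ) < (k:ℝ) + K0 := by positivity
    set t : ℝ := (k:ℝ) + K0 with htdef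
    have htK : K0 ≤ t := le_add_of_nonneg_left (Nat.cast_nonneg k)
    have hrk := hrec k
    rw [← htdef] at hrk
    have hcast : ((k+1 : ℕ):ℝ) + K0 = t + 1 := by rw [htdef]; push_cast; ring
    rw [hcast]
    have hek0 : 0 ≤ ∫ ω, ‖x k ω - xstar‖^2 ∂(ℙ : Measure Ω) :=
      integral_nonneg fun ω => by positivity
    set e : ℝ := ∫ ω, ‖x k ω - xstar‖^2 ∂(ℙ : Measure Ω) with hedef
    set q : ℝ := 1 - 2*μ*(β/t) + L^2*(β/t)^2 with hqdef
    set G : ℝ := ∫ ω, ‖x (k+1) ω - xstar‖^2 ∂(ℙ : Measure Ω) with hGdef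
    clear_value e G t q
    clear hrec key hx2 hxSM hη2 hηSM hmle hvar hmds hint2 hint hmeas h𝓕le h𝓕 hxrec hx0 hmono hlip hFcont hFbound
    clear_value C
    have ht2 : (2:ℝ) ≤ t := le_trans (hβμ.trans hK2) htK
    have hβμt : β * μ ≤ t := hK2.trans htK
    have ht1 : (0:ℝ) < t + 1 := by linarith
    have hσβ : 2*β^2*σ^2 ≤ C*μ*β := by nlinarith [hCσ', hβpos.le]
    rcases le_or_gt q 0 with hq | hq
    · have h1 : G ≤ (β/t)^2 * σ^2 := by
        have h0 := mul_nonpos_of_nonpos_of_nonneg hq hek0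
        linarith
      refine h1.trans ?_
      rw [div_pow, div_mul_eq_mul_div, div_le_div_iff₀ (pow_pos ht 2) ht1]
      -- β^2 * σ^2 * (t+1) ≤ C * t^2
      nlinarith [mul_le_mul_of_nonneg_right hσβ ht1.le,
        mul_le_mul_of_nonneg_right (mul_le_mul_of_nonneg_left hβμt hCpos.le) ht1.le,
        mul_le_mul_of_nonneg_left (by linarith : t+1 ≤ 2*t) (mul_pos hCpos ht).le]
    · have h1 : G ≤ q * (C/t) + (β/t)^2 * σ^2 := by
        have h2 : q * e ≤ q * (C/t) := mul_le_mul_of_nonneg_left ih hq.le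
        linarith
      refine h1.trans ?_
      have hqle : q ≤ 1 - β*μ/t := by
        rw [hqdef]
        have h3 : L^2*(β/t)^2 ≤ β*μ/t := by
          rw [div_pow, ← mul_div_assoc, div_le_div_iff₀ (pow_pos ht 2) ht]
          -- L^2 * β^2 * t ≤ β*μ*t^2
          nlinarith [mul_le_mul_of_nonneg_right
            (hK1.trans (mul_le_mul_of_nonneg_right htK hμ.le)) (mul_pos hβpos ht).le]
        have h4 : 2*μ*(β/t) = β*μ/t + β*μ/t := by ring
        linarith
      have h5 : q * (C/t) ≤ (1 - β*μ/t) * (C/t) :=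
        mul_le_mul_of_nonneg_right hqle (div_nonneg hCpos.le ht.le)
      refine le_trans (b := (1 - β*μ/t) * (C/t) + (β/t)^2 * σ^2) (by linarith) ?_
      -- (1 - β*μ/t) * (C/t) + (β/t)^2 * σ^2 ≤ C/(t+1)
      rw [div_pow,
        show (1 - β*μ/t) * (C/t) + β^2/t^2 * σ^2 = ((t - β*μ)*C + β^2*σ^2)/t^2 by
          field_simp,
        div_le_div_iff₀ (pow_pos ht 2) ht1]
      -- ((t - β*μ)*C + β^2*σ^2) * (t+1) ≤ C * t^2
      nlinarith [mul_le_mul_of_nonneg_right hσβ ht1.le,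
        mul_le_mul_of_nonneg_left (by nlinarith [hβμ] : 2*t ≤ β*μ*(t+1)) hCpos.le]
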